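/- Let A > 0, B > 0, C ∈ ℝ, f(y) = (A·y·ln(B·y) + y + C)·e^y for y > 0, and let δ be the unique positive solution of A·(y+1)·ln(B·y) + y + A + C + 1 = 0. Then f restricted to [δ, ∞) is a strictly increasing bijection from [δ, ∞) onto [f(δ), ∞); in particular, for every x ≥ f(δ) there exists a unique y ≥ δ with (A·y·ln(B·y) + y + C)·e^y = x. -/

import Mathlib

/-- Let `A, B > 0` and `δ` the unique positive zero of
`A·(y+1)·ln(B·y) + y + A + C + 1`. Then `f(y) = (A·y·ln(B·y) + y + C)·e^y`
restricted to `[δ, ∞)` is a strictly increasing bijection onto `[f(δ), ∞)`; in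
particular, for every `x ≥ f(δ)` there is a unique `y ≥ δ` with `f(y) = x`. -/
theorem branch_W1_bijection (A B C : ℝ) (hA : 0 < A) (hB : 0 < B) (δ : ℝ)
    (hδ : 0 < δ) (hzero : A * (δ + 1) * Real.log (B * δ) + δ + A + C + 1 = 0)
    (huniq : ∀ y : ℝ, 0 < y →
      A * (y + 1) * Real.log (B * y) + y + A + C + 1 = 0 → y = δ) :
    StrictMonoOn (fun y : ℝ => (A * y * Real.log (B * y) + y + C) * Real.exp y)
      (Set.Ici δ) ∧
    (fun y : ℝ => (A * y * Real.log (B * y) + y + C) * Real.exp y) '' Set.Ici δ =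
      Set.Ici ((A * δ * Real.log (B * δ) + δ + C) * Real.exp δ) ∧
    ∀ x : ℝ, (A * δ * Real.log (B * δ) + δ + C) * Real.exp δ ≤ x →
      ∃! y : ℝ, δ ≤ y ∧ (A * y * Real.log (B * y) + y + C) * Real.exp y = x := by
  set f : ℝ → ℝ := fun y => (A * y * Real.log (B * y) + y + C) * Real.exp y with hf
  set g : ℝ → ℝ := fun y => A * (y + 1) * Real.log (B * y) + y + A + C + 1 with hg
  -- derivative of f
  have hderiv : ∀ y : ℝ, 0 < y → HasDerivAt f (Real.exp y * g y) y := by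
    intro y hy
    have hy' : B * y ≠ 0 := by positivity
    have hlog : HasDerivAt (fun y : ℝ => Real.log (B * y)) (B * 1 / (B * y)) y :=
      ((hasDerivAt_id y).const_mul B).log hy'
    have h1 : HasDerivAt (fun y : ℝ => A * y * Real.log (B * y) + y + C)
        ((A * 1) * Real.log (B * y) + (A * y) * (B * 1 / (B * y)) + 1 + 0) y :=
      ((((hasDerivAt_id y).const_mul A).mul hlog).add (hasDerivAt_id y)).add
        (hasDerivAt_const y C)
    have h2 : HasDerivAt (fun y : ℝ => (A * y * Real.log (B * y) + y + C) * Real.exp y) _ y :=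
      h1.mul (Real.hasDerivAt_exp y)
    convert h2 using 1
    simp only [hg]
    field_simp
    ring
  -- continuity of g and f on Ici δ
  have hcontg : ContinuousOn g (Set.Ici δ) := by
    intro t ht
    have ht0 : 0 < t := lt_of_lt_of_le hδ ht
    apply ContinuousAt.continuousWithinAt
    have hlog : ContinuousAt (fun y : ℝ => Real.log (B * y)) t :=
      (Real.continuousAt_log (by positivity)).comp (continuousAt_const.mul continuousAt_id)
    exact ((((continuousAt_const.mul (continuousAt_id.add continuousAt_const)).mul
      hlog).add continuousAt_id).add continuousAt_const).add continuousAt_const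
        |>.add continuousAt_const
  have hcontf : ContinuousOn f (Set.Ici δ) := by
    intro t ht
    have ht0 : 0 < t := lt_of_lt_of_le hδ ht
    apply ContinuousAt.continuousWithinAt
    have hlog : ContinuousAt (fun y : ℝ => Real.log (B * y)) t :=
      (Real.continuousAt_log (by positivity)).comp (continuousAt_const.mul continuousAt_id)
    exact ((((continuousAt_const.mul continuousAt_id).mul hlog).add
      continuousAt_id).add continuousAt_const).mul Real.continuous_exp.continuousAt
  -- g is positive on (δ, ∞)
  have hgpos : ∀ y : ℝ, δ < y → 0 < g y := by
    intro y hy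
    by_contra h
    push_neg at h
    have hy0 : 0 < y := lt_trans hδ hy
    set z := max (y + 1) (max (1 / B) (|A| + |C|)) with hz
    have hzy : y < z := lt_of_lt_of_le (by linarith) (le_max_left _ _)
    have hz0 : 0 < z := lt_trans hy0 hzy
    have hBz : 1 ≤ B * z := by
      have h1 : 1 / B ≤ z := le_trans (le_max_left _ _) (le_max_right _ _)
      rw [div_le_iff₀ hB] at h1
      linarith [mul_comm B z ▸ h1]
    have hlogz : 0 ≤ Real.log (B * z) := Real.log_nonneg hBz
    have hgz : 0 < g z := by
      have h1 : 0 ≤ A * (z + 1) * Real.log (B * z) :=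
        mul_nonneg (by positivity) hlogz
      have h2 : |A| + |C| ≤ z := le_trans (le_max_right _ _) (le_max_right _ _)
      have h3 := neg_abs_le A
      have h4 := neg_abs_le C
      simp only [hg]
      linarith
    obtain ⟨w, hw, hw0⟩ := intermediate_value_Icc hzy.le
      (hcontg.mono (Set.Icc_subset_Ici_iff hzy.le |>.mpr hy.le)) ⟨h, hgz.le⟩
    have hw0' := huniq w (lt_of_lt_of_le hy0 hw.1) hw0
    linarith [hw.1]
  -- strict monotonicity
  have hmono : StrictMonoOn f (Set.Ici δ) := by
    apply strictMonoOn_of_deriv_pos (convex_Ici δ) hcontf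
    intro x hx
    rw [interior_Ici] at hx
    rw [(hderiv x (lt_trans hδ hx)).deriv]
    exact mul_pos (Real.exp_pos x) (hgpos x hx)
  -- image
  have himg : f '' Set.Ici δ = Set.Ici (f δ) := by
    apply Set.Subset.antisymm
    · rintro _ ⟨y, hy, rfl⟩
      exact hmono.monotoneOn Set.self_mem_Ici hy hy
    · intro x hx
      set z := max δ (max (1 / B) (max x 0 - C)) with hz
      have hδz : δ ≤ z := le_max_left _ _
      have hz0 : 0 < z := lt_of_lt_of_le hδ hδz
      have hBz : 1 ≤ B * z := by
        have h1 : 1 / B ≤ z := le_trans (le_max_left _ _) (le_max_right _ _)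
        rw [div_le_iff₀ hB] at h1
        linarith [mul_comm B z ▸ h1]
      have hfz : x ≤ f z := by
        have h1 : 0 ≤ A * z * Real.log (B * z) :=
          mul_nonneg (by positivity) (Real.log_nonneg hBz)
        have h2 : max x 0 - C ≤ z := le_trans (le_max_right _ _) (le_max_right _ _)
        have h2a : x ≤ max x 0 := le_max_left _ _
        have h2b : (0:ℝ) ≤ max x 0 := le_max_right _ _
        have h3 : 1 ≤ Real.exp z := Real.one_le_exp hz0.le
        simp only [hf]
        nlinarith [mul_nonneg (by linarith : (0:ℝ) ≤ A * z * Real.log (B * z) + z + C)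
          (by linarith : (0:ℝ) ≤ Real.exp z - 1)]
      obtain ⟨w, hw, hwx⟩ := intermediate_value_Icc hδz
        (hcontf.mono (Set.Icc_subset_Ici_iff hδz |>.mpr le_rfl)) ⟨hx, hfz⟩
      exact ⟨w, hw.1, hwx⟩
  refine ⟨hmono, himg, ?_⟩
  intro x hx
  have hx' : x ∈ Set.Ici (f δ) := hx
  rw [← himg] at hx'
  obtain ⟨y, hy, hyx⟩ := hx'
  exact ⟨y, ⟨hy, hyx⟩, fun w ⟨hw, hwx⟩ => hmono.injOn hw hy (hwx.trans hyx.symm)⟩
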